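/- Stability of the Evolved Sampling transfer function: if β1, β2 ∈ (0,1), then for every real x, |H(ix)| ≤ 1, where H(z) = ((β2 − β1)·z + (1 − β2)) / (z + (1 − β2)). That is, the Evolved Sampling weight signal does not amplify any frequency of the loss signal. -/

import Mathlib

/-- Stability of the Evolved Sampling transfer function: for β1, β2 ∈ (0,1), the
transfer function has modulus at most 1 on the imaginary axis. -/
theorem evolved_sampling_transfer_function_stable
    (β1 β2 : ℝ) (hβ1 : β1 ∈ Set.Ioo (0:ℝ) 1) (hβ2 : β2 ∈ Set.Ioo (0:ℝ) 1) :
    ∀ x : ℝ,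
      ‖(((β2 - β1 : ℝ) : ℂ) * (Complex.I * (x : ℂ)) + ((1 - β2 : ℝ) : ℂ)) /
          (Complex.I * (x : ℂ) + ((1 - β2 : ℝ) : ℂ))‖ ≤ 1 := by
  intro x
  obtain ⟨h1, h2⟩ := hβ1
  obtain ⟨h3, h4⟩ := hβ2
  have hden : (Complex.I * (x : ℂ) + ((1 - β2 : ℝ) : ℂ)) ≠ 0 := by
    intro h
    have := congrArg Complex.re h
    simp at this
    linarith
  rw [norm_div, div_le_one (norm_pos_iff.mpr hden)]
  have hsq : Complex.normSq ((((β2 - β1 : ℝ) : ℂ) * (Complex.I * (x : ℂ)) + ((1 - β2 : ℝ) : ℂ)))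
      ≤ Complex.normSq (Complex.I * (x : ℂ) + ((1 - β2 : ℝ) : ℂ)) := by
    simp [Complex.normSq_apply]
    have key : (β2 - β1)^2 ≤ 1 := by nlinarith
    nlinarith [mul_le_mul_of_nonneg_right key (sq_nonneg x)]
  rw [Complex.norm_def, Complex.norm_def]
  exact Real.sqrt_le_sqrt hsq
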